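/- A homeomorphism f of a compact metric space has the L-shadowing property if and only if it has the shadowing property and satisfies the asymptotic local-product-structure: for each ε > 0 there is δ > 0 such that d(x,y) ≤ δ implies V^s_ε(x) ∩ V^u_ε(y) ≠ ∅. -/

import Mathlib

open Topology Filter Metric TopologicalSpace

namespace LS

variable {X Y : Type*} [MetricSpace X] [MetricSpace Y]

/-- finite forward iterates of a homeomorphism -/
def hpowAux (f : X ≃ₜ X) : ℕ → X ≃ₜ X
  | 0 => Homeomorph.refl X
  | n+1 => (hpowAux f n).trans f

/-- `ℤ`-iterates of a homeomorphism: `hpow f k` is the `k`-th iterate `f^k`. -/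
def hpow (f : X ≃ₜ X) : ℤ → X ≃ₜ X
  | Int.ofNat n => hpowAux f n
  | Int.negSucc n => (hpowAux f (n+1)).symm

/-- the `ℤ`-iteration map of `f` -/
def F (f : X ≃ₜ X) : ℤ → X → X := fun k => hpow f k

/-- δ-limit-pseudo-orbit for a system given by its iterate family `T` -/
def IsLimitPseudoOrbit (T : ℤ → Y → Y) (δ : ℝ) (x : ℤ → Y) : Prop :=
  (∀ k : ℤ, dist (T 1 (x k)) (x (k+1)) ≤ δ) ∧
  Tendsto (fun k : ℤ => dist (T 1 (x k)) (x (k+1))) (cocompact ℤ) (𝓝 0)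

/-- `z` ε-limit-shadows the sequence `x` -/
def LimitShadows (T : ℤ → Y → Y) (ε : ℝ) (x : ℤ → Y) (z : Y) : Prop :=
  (∀ k : ℤ, dist (T k z) (x k) ≤ ε) ∧
  Tendsto (fun k : ℤ => dist (T k z) (x k)) (cocompact ℤ) (𝓝 0)

/-- the L-shadowing property -/
def LShadowing (T : ℤ → Y → Y) : Prop :=
  ∀ ε > (0:ℝ), ∃ δ > (0:ℝ), ∀ x : ℤ → Y, IsLimitPseudoOrbit T δ x → ∃ z, LimitShadows T ε x z

/-- the shadowing property -/
def Shadowing (T : ℤ → Y → Y) : Prop :=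
  ∀ ε > (0:ℝ), ∃ δ > (0:ℝ), ∀ x : ℤ → Y,
    (∀ k : ℤ, dist (T 1 (x k)) (x (k+1)) < δ) → ∃ z, ∀ k : ℤ, dist (T k z) (x k) < ε

/-- local c-stable set -/
def Ws (f : X ≃ₜ X) (c : ℝ) (x : X) : Set X :=
  {y | ∀ k : ℤ, 0 ≤ k → dist (F f k y) (F f k x) ≤ c}

/-- local c-unstable set -/
def Wu (f : X ≃ₜ X) (c : ℝ) (x : X) : Set X :=
  {y | ∀ k : ℤ, k ≤ 0 → dist (F f k y) (F f k x) ≤ c}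

/-- stable set -/
def WsA (f : X ≃ₜ X) (x : X) : Set X :=
  {y | Tendsto (fun k : ℤ => dist (F f k y) (F f k x)) atTop (𝓝 0)}

/-- unstable set -/
def WuA (f : X ≃ₜ X) (x : X) : Set X :=
  {y | Tendsto (fun k : ℤ => dist (F f k y) (F f k x)) atBot (𝓝 0)}

/-- asymptotic local stable set -/
def Vs (f : X ≃ₜ X) (c : ℝ) (x : X) : Set X := WsA f x ∩ Ws f c x

/-- asymptotic local unstable set -/
def Vu (f : X ≃ₜ X) (c : ℝ) (x : X) : Set X := WuA f x ∩ Wu f c x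

/-- image of a nonempty compact set under a homeomorphism -/
def himg (f : X ≃ₜ X) (A : NonemptyCompacts X) : NonemptyCompacts X :=
  ⟨⟨f '' A, A.isCompact.image f.continuous⟩, A.nonempty.image f⟩

/-- the `ℤ`-iteration family of the induced hyperspace map `2^f` -/
def HF (f : X ≃ₜ X) : ℤ → NonemptyCompacts X → NonemptyCompacts X :=
  fun k A => himg (hpow f k) A

end LS

namespace LS
variable {X : Type*} [MetricSpace X]

theorem F_zero (f : X ≃ₜ X) (x : X) : F f 0 x = x := rfl
theorem F_one (f : X ≃ₜ X) (x : X) : F f 1 x = f x := rfl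
theorem hpowAux_succ (f : X ≃ₜ X) (n : ℕ) (x : X) : hpowAux f (n+1) x = f (hpowAux f n x) := rfl
theorem hpowAux_succ' (f : X ≃ₜ X) : ∀ (n : ℕ) (x : X), hpowAux f (n+1) x = hpowAux f n (f x)
  | 0, x => rfl
  | n+1, x => by rw [hpowAux_succ, hpowAux_succ' f n x, ← hpowAux_succ]
theorem F_succ (f : X ≃ₜ X) (k : ℤ) (x : X) : F f (k+1) x = f (F f k x) := by
  cases k with
  | ofNat n =>
    show F f (Int.ofNat (n+1)) x = _
    rfl
  | negSucc n =>
    cases n with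
    | zero =>
      show x = f ((hpowAux f 1).symm x)
      conv_lhs => rw [← (hpowAux f 1).apply_symm_apply x]
      rfl
    | succ m =>
      show F f (Int.negSucc m) x = _
      show (hpowAux f (m+1)).symm x = f ((hpowAux f (m+2)).symm x)
      apply (hpowAux f (m+2)).injective
      rw [hpowAux_succ f (m+1), hpowAux_succ f (m+1), Homeomorph.apply_symm_apply,
        ← hpowAux_succ' f (m+1), Homeomorph.apply_symm_apply]
theorem F_pred (f : X ≃ₜ X) (k : ℤ) (x : X) : F f (k-1) x = f.symm (F f k x) := by
  have h := F_succ f (k-1) x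
  rw [sub_add_cancel] at h
  rw [h, Homeomorph.symm_apply_apply]
theorem F_add (f : X ≃ₜ X) (a b : ℤ) (x : X) : F f (a+b) x = F f a (F f b x) := by
  induction a using Int.induction_on with
  | zero => rw [zero_add]; rfl
  | succ i ih => rw [show (i:ℤ)+1+b = (i+b)+1 by ring, F_succ, ih, F_succ]
  | pred i ih => rw [show (-(i:ℤ)-1)+b = (-i+b)-1 by ring, F_pred, ih, F_pred]
theorem F_cont (f : X ≃ₜ X) (k : ℤ) : Continuous (F f k) := (hpow f k).continuous

end LS

namespace LS
variable {X : Type*} [MetricSpace X]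

theorem tendsto_cocompact_int_iff {α : Type*} {g : ℤ → α} {l : Filter α} :
    Tendsto g (cocompact ℤ) l ↔ Tendsto g atBot l ∧ Tendsto g atTop l := by
  rw [cocompact_eq_atBot_atTop, tendsto_sup]

/-- a sequence of reals that is eventually 0 on both ends tends to 0 cocompactly -/
theorem tendsto_cocompact_of_eventually_zero {g : ℤ → ℝ} (N : ℕ)
    (h : ∀ k : ℤ, (k < -(N:ℤ) ∨ (N:ℤ) < k) → g k = 0) :
    Tendsto g (cocompact ℤ) (𝓝 0) := by
  rw [tendsto_cocompact_int_iff]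
  constructor
  · apply Tendsto.congr' _ tendsto_const_nhds
    filter_upwards [eventually_le_atBot (-(N:ℤ)-1)] with k hk
    exact (h k (Or.inl (by omega))).symm
  · apply Tendsto.congr' _ tendsto_const_nhds
    filter_upwards [eventually_ge_atTop ((N:ℤ)+1)] with k hk
    exact (h k (Or.inr (by omega))).symm

end LS
namespace LS
variable {X : Type*} [MetricSpace X]

theorem shadowing_of_lShadowing [CompactSpace X] (f : X ≃ₜ X) (h : LShadowing (F f)) :
    Shadowing (F f) := by
  intro ε hε
  obtain ⟨δ, hδ, hsh⟩ := h (ε/2) (by positivity)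
  refine ⟨δ, hδ, fun x hx => ?_⟩
  -- truncated pseudo-orbits
  set xn : ℕ → ℤ → X := fun n k =>
    if k < -(n:ℤ) then F f (k + n) (x (-(n:ℤ)))
    else if (n:ℤ) < k then F f (k - n) (x n) else x k with hxn
  have hmid : ∀ (n : ℕ) (k : ℤ), -(n:ℤ) ≤ k → k ≤ n → xn n k = x k := by
    intro n k h1 h2
    simp only [hxn]
    split_ifs with hA hB
    · exact absurd hA (by omega)
    · exact absurd hB (by omega)
    · rfl
  have hge : ∀ (n : ℕ) (k : ℤ), (n:ℤ) ≤ k → xn n k = F f (k - n) (x n) := by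
    intro n k h1
    rcases eq_or_lt_of_le h1 with h1 | h1
    · rw [hmid n k (by omega) (by omega), ← h1, sub_self, F_zero]
    · simp only [hxn]
      split_ifs with hA hB
      · exact absurd hA (by omega)
      · rfl

  have hle : ∀ (n : ℕ) (k : ℤ), k ≤ -(n:ℤ) → xn n k = F f (k + n) (x (-(n:ℤ))) := by
    intro n k h1
    rcases eq_or_lt_of_le h1 with h1 | h1
    · rw [hmid n k (by omega) (by omega), h1, neg_add_cancel, F_zero]
    · simp only [hxn]
      rw [if_pos h1]
  have hzero : ∀ (n : ℕ) (k : ℤ), (k < -(n:ℤ) ∨ (n:ℤ) ≤ k) →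
      dist (F f 1 (xn n k)) (xn n (k+1)) = 0 := by
    intro n k hk
    rcases hk with hk | hk
    · rw [hle n k (by omega), hle n (k+1) (by omega), ← F_add]
      rw [show (1 : ℤ) + (k + n) = k + 1 + n by ring, dist_self]
    · rw [hge n k (by omega), hge n (k+1) (by omega), ← F_add]
      rw [show (1 : ℤ) + (k - n) = k + 1 - n by ring, dist_self]
  have hpo : ∀ n : ℕ, IsLimitPseudoOrbit (F f) δ (xn n) := by
    intro n
    constructor
    · intro k
      rcases le_or_gt (-(n:ℤ)) k with h1 | h1
      · rcases lt_or_ge k n with h2 | h2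
        · rw [hmid n k h1 (by omega), hmid n (k+1) (by omega) (by omega)]
          exact (hx k).le
        · rw [hzero n k (Or.inr h2)]; exact hδ.le
      · rw [hzero n k (Or.inl h1)]; exact hδ.le
    · exact tendsto_cocompact_of_eventually_zero n
        (fun k hk => hzero n k (by omega))
  choose z hz using fun n => hsh (xn n) (hpo n)
  obtain ⟨a, -, φ, hφ, ha⟩ := isCompact_univ.tendsto_subseq (x := z) (fun n => Set.mem_univ _)
  refine ⟨a, fun k => ?_⟩
  have hcont : Continuous fun w => dist (F f k w) (x k) := (F_cont f k).dist continuous_const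
  have hlim : Tendsto (fun j => dist (F f k (z (φ j))) (x k)) atTop
      (𝓝 (dist (F f k a) (x k))) := (hcont.tendsto a).comp ha
  have hev : ∀ᶠ j in atTop, dist (F f k (z (φ j))) (x k) ≤ ε/2 := by
    filter_upwards [eventually_ge_atTop k.natAbs] with j hj
    have h1 : (k.natAbs : ℤ) ≤ (φ j : ℤ) := by exact_mod_cast Nat.le_trans hj (hφ.le_apply)
    have := (hz (φ j)).1 k
    rwa [hmid (φ j) k (by omega) (by omega)] at this
  exact lt_of_le_of_lt (le_of_tendsto hlim hev) (by linarith)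

end LS
namespace LS
variable {X : Type*} [MetricSpace X]

theorem lps_of_lShadowing (f : X ≃ₜ X) (h : LShadowing (F f)) :
    ∀ ε > (0:ℝ), ∃ δ > (0:ℝ), ∀ x y : X, dist x y ≤ δ →
      (Vs f ε x ∩ Vu f ε y).Nonempty := by
  intro ε hε
  obtain ⟨δ₀, hδ₀, hsh⟩ := h (ε/2) (by positivity)
  refine ⟨min δ₀ (ε/2), by positivity, fun x y hxy => ?_⟩
  set w : ℤ → X := fun k => if k < 0 then F f k y else F f k x with hw
  have hwge : ∀ k : ℤ, 0 ≤ k → w k = F f k x := fun k hk => by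
    simp only [hw]; rw [if_neg (by omega)]
  have hwlt : ∀ k : ℤ, k < 0 → w k = F f k y := fun k hk => by
    simp only [hw]; rw [if_pos hk]
  have herr : ∀ k : ℤ, k ≠ -1 → dist (F f 1 (w k)) (w (k+1)) = 0 := by
    intro k hk
    rcases lt_or_ge k 0 with h1 | h1
    · rw [hwlt k h1, hwlt (k+1) (by omega), ← F_add, add_comm, dist_self]
    · rw [hwge k h1, hwge (k+1) (by omega), ← F_add, add_comm, dist_self]
  have herr1 : dist (F f 1 (w (-1))) (w 0) = dist x y := by
    rw [hwlt (-1) (by omega), hwge 0 le_rfl, ← F_add]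
    norm_num [F_zero, dist_comm]
  have hpo : IsLimitPseudoOrbit (F f) δ₀ w := by
    constructor
    · intro k
      rcases eq_or_ne k (-1) with hk | hk
      · rw [hk]; rw [show (-1:ℤ)+1 = 0 by ring, herr1]
        exact hxy.trans (min_le_left _ _)
      · rw [herr k hk]; exact hδ₀.le
    · refine tendsto_cocompact_of_eventually_zero 1 (fun k hk => herr k (by omega))
  obtain ⟨z, hz1, hz2⟩ := hsh w hpo
  rw [tendsto_cocompact_int_iff] at hz2
  have hdzx : dist z x ≤ ε/2 := by
    have := hz1 0; rwa [hwge 0 le_rfl, F_zero, F_zero] at this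
  refine ⟨z, ⟨?_, ?_⟩, ?_, ?_⟩
  · -- WsA x
    apply hz2.2.congr'
    filter_upwards [eventually_ge_atTop (0:ℤ)] with k hk
    rw [hwge k hk]
  · -- Ws ε x
    intro k hk
    have := hz1 k; rw [hwge k hk] at this
    exact this.trans (by linarith)
  · -- WuA y
    apply hz2.1.congr'
    filter_upwards [eventually_le_atBot (-1:ℤ)] with k hk
    rw [hwlt k (by omega)]
  · -- Wu ε y
    intro k hk
    rcases lt_or_ge k 0 with h1 | h1
    · have := hz1 k; rw [hwlt k h1] at this
      exact this.trans (by linarith)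
    · have hk0 : k = 0 := le_antisymm hk h1
      subst hk0
      simp only [F_zero]
      calc dist z y ≤ dist z x + dist x y := dist_triangle _ _ _
        _ ≤ ε/2 + ε/2 := add_le_add hdzx (hxy.trans (min_le_right _ _))
        _ = ε := by ring
end LS
namespace LS
variable {X : Type*} [MetricSpace X]

theorem F_shift (f : X ≃ₜ X) (M k : ℤ) (c : X) : F f k (F f (-M) c) = F f (k - M) c := by
  rw [← F_add, show k + -M = k - M by ring]

theorem F_unshift (f : X ≃ₜ X) (M k : ℤ) (p : X) : F f (k - M) (F f M p) = F f k p := by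
  rw [← F_add, sub_add_cancel]

theorem tendsto_shift_atTop {g : ℤ → ℝ} {M : ℤ} (h : Tendsto g atTop (𝓝 0)) :
    Tendsto (fun k : ℤ => g (k - M)) atTop (𝓝 0) := by
  apply h.comp
  simp only [sub_eq_add_neg]
  exact tendsto_atTop_add_const_right atTop (-M) tendsto_id

theorem tendsto_shift_atBot {g : ℤ → ℝ} {M : ℤ} (h : Tendsto g atBot (𝓝 0)) :
    Tendsto (fun k : ℤ => g (k - M)) atBot (𝓝 0) := by
  apply h.comp
  simp only [sub_eq_add_neg]
  exact tendsto_atBot_add_const_right atBot (-M) tendsto_id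

/-- auxiliary state for the inductive gluing construction -/
structure IterState (X : Type*) where
  y : X
  z : X
  z' : X
  M : ℤ
  M' : ℤ

end LS
namespace LS
variable {X : Type*} [MetricSpace X]

theorem lShadowing_of_shadowing_lps [CompactSpace X] (f : X ≃ₜ X)
    (hsh : Shadowing (F f))
    (hlps : ∀ ε > (0:ℝ), ∃ δ > (0:ℝ), ∀ x y : X, dist x y ≤ δ →
      (Vs f ε x ∩ Vu f ε y).Nonempty) :
    LShadowing (F f) := by
  intro ε hε
  -- constants
  set r : ℕ → ℝ := fun n => ε / 2^(n+4) with hrdef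
  have hrpos : ∀ n, 0 < r n := fun n => by positivity
  have hr2 : ∀ n, r n = 2 * r (n+1) := by
    intro n
    simp only [hrdef]
    rw [show n+1+4 = (n+4)+1 by ring, pow_succ]
    ring
  have hrmono : ∀ a b : ℕ, a ≤ b → r b ≤ r a := by
    intro a b hab
    simp only [hrdef]
    apply div_le_div_of_nonneg_left hε.le (by positivity)
    exact pow_le_pow_right₀ (by norm_num) (by omega)
  have hlps' : ∀ n : ℕ, ∃ β > (0:ℝ), ∀ x y : X, dist x y ≤ β →
      (Vs f (r n) x ∩ Vu f (r n) y).Nonempty := fun n => hlps (r n) (hrpos n)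
  choose β hβpos hβ using hlps'
  set B : ℕ → ℝ := fun n =>
    Nat.rec (min (β 0) (r 0)) (fun m Bm => min (min (β (m+1)) (r (m+1))) Bm) n with hBdef
  have hB0 : B 0 = min (β 0) (r 0) := rfl
  have hBsucc : ∀ n, B (n+1) = min (min (β (n+1)) (r (n+1))) (B n) := fun n => rfl
  have hBpos : ∀ n, 0 < B n := by
    intro n
    induction n with
    | zero => rw [hB0]; exact lt_min (hβpos 0) (hrpos 0)
    | succ m ih => rw [hBsucc]; exact lt_min (lt_min (hβpos (m+1)) (hrpos (m+1))) ih
  have hBβ : ∀ n, B n ≤ β n := by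
    intro n
    cases n with
    | zero => rw [hB0]; exact min_le_left _ _
    | succ m => rw [hBsucc]; exact (min_le_left _ _).trans (min_le_left _ _)
  have hBr : ∀ n, B n ≤ r n := by
    intro n
    cases n with
    | zero => rw [hB0]; exact min_le_right _ _
    | succ m => rw [hBsucc]; exact (min_le_left _ _).trans (min_le_right _ _)
  have hBmono : ∀ n, B (n+1) ≤ B n := fun n => by rw [hBsucc]; exact min_le_right _ _
  set ε' : ℕ → ℝ := fun n => B (n+1) / 2 with hε'def
  have hε'pos : ∀ n, 0 < ε' n := fun n => by
    simp only [hε'def]; linarith [hBpos (n+1)]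
  have hε'r : ∀ n, ε' n ≤ r (n+1) := fun n => by
    simp only [hε'def]; linarith [hBr (n+1), hrpos (n+1)]
  have hglue : ∀ n : ℕ, ε' n + ε' (n+1) / 2 ≤ β (n+1) := by
    intro n
    simp only [hε'def]
    have h1 := hBmono (n+1)
    have h2 := hBβ (n+1)
    have h3 := hBpos (n+1)
    linarith
  choose δ hδpos hδ using fun n => hsh (ε' n / 2) (by linarith [hε'pos n])
  refine ⟨δ 0 / 2, by linarith [hδpos 0], ?_⟩
  rintro x ⟨hx1, hx2⟩
  rw [tendsto_cocompact_int_iff] at hx2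
  have hsmallT : ∀ η : ℝ, 0 < η → ∃ K : ℤ, ∀ k, K ≤ k →
      dist (F f 1 (x k)) (x (k+1)) < η := by
    intro η hη
    exact eventually_atTop.mp (hx2.2.eventually_lt_const hη)
  have hsmallB : ∀ η : ℝ, 0 < η → ∃ K : ℤ, ∀ k, k ≤ K →
      dist (F f 1 (x k)) (x (k+1)) < η := by
    intro η hη
    exact eventually_atBot.mp (hx2.1.eventually_lt_const hη)
  -- base shadowing point
  obtain ⟨z0, hz0⟩ := hδ 0 x (fun k => lt_of_le_of_lt (hx1 k) (by linarith [hδpos 0]))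
  -- the invariant
  set P : ℕ → IterState X → Prop := fun n s =>
    0 ≤ s.M ∧ 0 ≤ s.M' ∧
    (∀ k, dist (F f k s.y) (x k) ≤ ε/2 - ε/2^(n+2)) ∧
    (∀ k, s.M ≤ k → dist (F f k s.z) (x k) ≤ ε' n / 2) ∧
    Tendsto (fun k => dist (F f k s.y) (F f k s.z)) atTop (𝓝 0) ∧
    (∀ k, k ≤ -s.M' → dist (F f k s.z') (x k) ≤ ε' n / 2) ∧
    Tendsto (fun k => dist (F f k s.y) (F f k s.z')) atBot (𝓝 0) ∧
    (∀ k, s.M ≤ k → dist (F f k s.y) (x k) ≤ 3 * r n) ∧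
    (∀ k, k ≤ -s.M' → dist (F f k s.y) (x k) ≤ 3 * r n) with hPdef
  have hP0 : P 0 ⟨z0, z0, z0, 0, 0⟩ := by
    have hr1 : r 1 = ε/32 := by simp only [hrdef]; norm_num
    have he0 : ε' 0 ≤ ε/32 := (hε'r 0).trans hr1.le
    have hr0 : r 0 = ε/16 := by simp only [hrdef]; norm_num
    have hcz : Tendsto (fun k : ℤ => dist (F f k z0) (F f k z0)) atTop (𝓝 0) :=
      Tendsto.congr (fun k => (dist_self (F f k z0)).symm) tendsto_const_nhds
    have hcz' : Tendsto (fun k : ℤ => dist (F f k z0) (F f k z0)) atBot (𝓝 0) :=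
      Tendsto.congr (fun k => (dist_self (F f k z0)).symm) tendsto_const_nhds
    simp only [hPdef]
    refine ⟨le_refl 0, le_refl 0, fun k => ?_, fun k _ => (hz0 k).le, hcz,
      fun k _ => (hz0 k).le, hcz', fun k _ => ?_, fun k _ => ?_⟩
    · refine (hz0 k).le.trans ?_
      norm_num
      linarith
    · refine (hz0 k).le.trans ?_
      rw [hr0]; linarith
    · refine (hz0 k).le.trans ?_
      rw [hr0]; linarith
  have step : ∀ (n : ℕ) (s : IterState X), ∃ s' : IterState X, P n s →
      P (n+1) s' ∧ (∀ k, -s'.M' ≤ k → k ≤ s'.M →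
        dist (F f k s'.y) (F f k s.y) ≤ 2 * r (n+1)) := by
    intro n s
    by_cases hPs : P n s
    swap
    · exact ⟨s, fun h => absurd h hPs⟩
    have hPs' := hPs
    simp only [hPdef] at hPs'
    obtain ⟨hsM0, hsM'0, ha, hb, hc, hb', hc', hd, hd'⟩ := hPs'
    -- numeric facts
    have hε'r1 : ε' (n+1) ≤ r (n+1) := (hε'r (n+1)).trans (hrmono (n+1) (n+2) (by omega))
    have hu0 : (0:ℝ) < ε / 2^n := by positivity
    have huε : ε / 2^n ≤ ε := by
      apply div_le_self hε.le
      exact one_le_pow₀ (by norm_num)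
    have hpow2 : (2:ℝ)^(n+2) = 2^n * 4 := by rw [pow_add]; norm_num
    have hpow3 : (2:ℝ)^(n+3) = 2^n * 8 := by rw [pow_add]; norm_num
    have hpow5 : (2:ℝ)^(n+5) = 2^n * 32 := by rw [pow_add]; norm_num
    have hrn1 : r (n+1) = ε / 2^n / 32 := by
      simp only [hrdef]
      rw [show n+1+4 = n+5 from rfl, hpow5, ← div_div]
    have hE2 : ε/2^(n+2) = ε/2^n/4 := by rw [hpow2, ← div_div]
    have hE3 : ε/2^(n+3) = ε/2^n/8 := by rw [hpow3, ← div_div]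
    have hnum1 : 3 * r (n+1) ≤ ε/2 - ε/2^(n+1+2) := by
      rw [hrn1, show n+1+2 = n+3 from rfl, hE3]
      linarith
    have hnum2 : (ε/2 - ε/2^(n+2)) + 2 * r (n+1) ≤ ε/2 - ε/2^(n+1+2) := by
      rw [hrn1, hE2, show n+1+2 = n+3 from rfl, hE3]
      linarith
    -- choice of M
    obtain ⟨K, hK⟩ := hsmallT (δ (n+1)) (hδpos (n+1))
    obtain ⟨K2, hK2⟩ := eventually_atTop.mp
      (hc.eventually_lt_const (show (0:ℝ) < ε' n / 2 by linarith [hε'pos n]))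
    set M := max (max K K2) (max s.M 0) with hMdef
    have hM1 : ∀ k, M ≤ k → dist (F f 1 (x k)) (x (k+1)) < δ (n+1) := fun k hk =>
      hK k (by omega)
    have hM2 : dist (F f M s.y) (F f M s.z) ≤ ε' n / 2 := (hK2 M (by omega)).le
    have hMs : s.M ≤ M := by omega
    have hM0' : (0:ℤ) ≤ M := by omega
    -- forward tail pseudo-orbit
    set w : ℤ → X := fun k => if k < M then F f (k - M) (x M) else x k with hwdef
    have hwge : ∀ k, M ≤ k → w k = x k := fun k hk => by
      simp only [hwdef]; rw [if_neg (by omega)]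
    have hwle : ∀ k, k ≤ M → w k = F f (k - M) (x M) := by
      intro k hk
      rcases eq_or_lt_of_le hk with h | h
      · simp only [hwdef]; rw [if_neg (by omega), h, sub_self, F_zero]
      · simp only [hwdef]; rw [if_pos h]
    have herr : ∀ k, dist (F f 1 (w k)) (w (k+1)) < δ (n+1) := by
      intro k
      rcases lt_or_ge k M with h | h
      · rw [hwle k h.le, hwle (k+1) (by omega), ← F_add,
          show (1:ℤ) + (k - M) = k + 1 - M by ring, dist_self]
        exact hδpos (n+1)
      · rw [hwge k h, hwge (k+1) (by omega)]
        exact hM1 k h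
    obtain ⟨z1, hz1⟩ := hδ (n+1) w herr
    have hz1x : ∀ k, M ≤ k → dist (F f k z1) (x k) ≤ ε' (n+1) / 2 := by
      intro k hk; have h := (hz1 k).le; rwa [hwge k hk] at h
    -- first gluing
    have hab : dist (F f M z1) (F f M s.y) ≤ β (n+1) := by
      calc dist (F f M z1) (F f M s.y)
          ≤ dist (F f M z1) (x M) + dist (x M) (F f M s.z)
            + dist (F f M s.z) (F f M s.y) := dist_triangle4 _ _ _ _
        _ ≤ ε' (n+1)/2 + ε' n/2 + ε' n/2 := by
            refine add_le_add (add_le_add (hz1x M le_rfl) ?_) ?_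
            · rw [dist_comm]; exact hb M hMs
            · rw [dist_comm]; exact hM2
        _ ≤ β (n+1) := by linarith [hglue n]
    obtain ⟨c, ⟨hcWsA, hcWs⟩, hcWuA, hcWu⟩ := hβ (n+1) (F f M z1) (F f M s.y) hab
    set y1 : X := F f (-M) c with hy1def
    have hy1M : ∀ k : ℤ, F f k y1 = F f (k - M) c := fun k => F_shift f M k c
    have hy1z : ∀ k, M ≤ k → dist (F f k y1) (F f k z1) ≤ r (n+1) := by
      intro k hk
      rw [hy1M k, ← F_unshift f M k z1]
      exact hcWs (k - M) (by omega)
    have hy1zT : Tendsto (fun k => dist (F f k y1) (F f k z1)) atTop (𝓝 0) := by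
      apply (tendsto_shift_atTop (M := M) hcWsA).congr
      intro k
      rw [hy1M k, F_unshift]
    have hy1y : ∀ k, k ≤ M → dist (F f k y1) (F f k s.y) ≤ r (n+1) := by
      intro k hk
      rw [hy1M k, ← F_unshift f M k s.y]
      exact hcWu (k - M) (by omega)
    have hy1yB : Tendsto (fun k => dist (F f k y1) (F f k s.y)) atBot (𝓝 0) := by
      apply (tendsto_shift_atBot (M := M) hcWuA).congr
      intro k
      rw [hy1M k, F_unshift]
    -- choice of N
    obtain ⟨K', hK'⟩ := hsmallB (δ (n+1)) (hδpos (n+1))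
    obtain ⟨K3, hK3⟩ := eventually_atBot.mp
      (hy1yB.eventually_lt_const (show (0:ℝ) < ε' n / 4 by linarith [hε'pos n]))
    obtain ⟨K4, hK4⟩ := eventually_atBot.mp
      (hc'.eventually_lt_const (show (0:ℝ) < ε' n / 4 by linarith [hε'pos n]))
    set N := min (min K' K3) (min K4 (min (-s.M') 0)) with hNdef
    have hN1 : ∀ k, k ≤ N → dist (F f 1 (x k)) (x (k+1)) < δ (n+1) := fun k hk =>
      hK' k (by omega)
    have hN2 : dist (F f N y1) (F f N s.y) ≤ ε' n / 4 := (hK3 N (by omega)).le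
    have hN3 : dist (F f N s.y) (F f N s.z') ≤ ε' n / 4 := (hK4 N (by omega)).le
    have hN4 : N ≤ -s.M' := by omega
    have hN5 : N ≤ (0:ℤ) := by omega
    have hy1x : dist (F f N y1) (x N) ≤ ε' n := by
      calc dist (F f N y1) (x N)
          ≤ dist (F f N y1) (F f N s.y) + dist (F f N s.y) (F f N s.z')
            + dist (F f N s.z') (x N) := dist_triangle4 _ _ _ _
        _ ≤ ε' n/4 + ε' n/4 + ε' n/2 := add_le_add (add_le_add hN2 hN3) (hb' N hN4)
        _ = ε' n := by ring
    -- backward tail pseudo-orbit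
    set w' : ℤ → X := fun k => if N < k then F f (k - N) (x N) else x k with hw'def
    have hw'le : ∀ k, k ≤ N → w' k = x k := fun k hk => by
      simp only [hw'def]; rw [if_neg (by omega)]
    have hw'ge : ∀ k, N ≤ k → w' k = F f (k - N) (x N) := by
      intro k hk
      rcases eq_or_lt_of_le hk with h | h
      · simp only [hw'def]; rw [if_neg (by omega), ← h, sub_self, F_zero]
      · simp only [hw'def]; rw [if_pos h]
    have herr' : ∀ k, dist (F f 1 (w' k)) (w' (k+1)) < δ (n+1) := by
      intro k
      rcases lt_or_ge k N with h | h
      · rw [hw'le k h.le, hw'le (k+1) (by omega)]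
        exact hN1 k h.le
      · rw [hw'ge k h, hw'ge (k+1) (by omega), ← F_add,
          show (1:ℤ) + (k - N) = k + 1 - N by ring, dist_self]
        exact hδpos (n+1)
    obtain ⟨z1', hz1'⟩ := hδ (n+1) w' herr'
    have hz1'x : ∀ k, k ≤ N → dist (F f k z1') (x k) ≤ ε' (n+1)/2 := fun k hk => by
      have h := (hz1' k).le; rwa [hw'le k hk] at h
    -- second gluing
    have hab' : dist (F f N y1) (F f N z1') ≤ β (n+1) := by
      calc dist (F f N y1) (F f N z1')
          ≤ dist (F f N y1) (x N) + dist (x N) (F f N z1') := dist_triangle _ _ _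
        _ ≤ ε' n + ε' (n+1)/2 := add_le_add hy1x
            (by rw [dist_comm]; exact hz1'x N le_rfl)
        _ ≤ β (n+1) := hglue n
    obtain ⟨c', ⟨hc'WsA, hc'Ws⟩, hc'WuA, hc'Wu⟩ := hβ (n+1) (F f N y1) (F f N z1') hab'
    set y2 : X := F f (-N) c' with hy2def
    have hy2N : ∀ k : ℤ, F f k y2 = F f (k - N) c' := fun k => F_shift f N k c'
    have h2f : ∀ k, N ≤ k → dist (F f k y2) (F f k y1) ≤ r (n+1) := by
      intro k hk
      rw [hy2N k, ← F_unshift f N k y1]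
      exact hc'Ws (k - N) (by omega)
    have h2fT : Tendsto (fun k => dist (F f k y2) (F f k y1)) atTop (𝓝 0) := by
      apply (tendsto_shift_atTop (M := N) hc'WsA).congr
      intro k
      rw [hy2N k, F_unshift]
    have h2b : ∀ k, k ≤ N → dist (F f k y2) (F f k z1') ≤ r (n+1) := by
      intro k hk
      rw [hy2N k, ← F_unshift f N k z1']
      exact hc'Wu (k - N) (by omega)
    have h2bB : Tendsto (fun k => dist (F f k y2) (F f k z1')) atBot (𝓝 0) := by
      apply (tendsto_shift_atBot (M := N) hc'WuA).congr
      intro k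
      rw [hy2N k, F_unshift]
    -- tail estimates for y2
    have hfwd : ∀ k, M ≤ k → dist (F f k y2) (x k) ≤ 3 * r (n+1) := by
      intro k hk
      calc dist (F f k y2) (x k)
          ≤ dist (F f k y2) (F f k y1) + dist (F f k y1) (F f k z1)
            + dist (F f k z1) (x k) := dist_triangle4 _ _ _ _
        _ ≤ r (n+1) + r (n+1) + ε' (n+1)/2 :=
            add_le_add (add_le_add (h2f k (by omega)) (hy1z k hk)) (hz1x k hk)
        _ ≤ 3 * r (n+1) := by linarith
    have hbwd : ∀ k, k ≤ N → dist (F f k y2) (x k) ≤ 3 * r (n+1) := by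
      intro k hk
      calc dist (F f k y2) (x k)
          ≤ dist (F f k y2) (F f k z1') + dist (F f k z1') (x k) := dist_triangle _ _ _
        _ ≤ r (n+1) + ε' (n+1)/2 := add_le_add (h2b k hk) (hz1'x k hk)
        _ ≤ 3 * r (n+1) := by linarith [hrpos (n+1)]
    -- assemble the new state
    refine ⟨⟨y2, z1, z1', M, -N⟩, fun _ => ⟨?_, ?_⟩⟩
    · simp only [hPdef]
      refine ⟨hM0', by omega, ?_, fun k hk => hz1x k hk, ?_, fun k hk => hz1'x k (by omega),
        h2bB, fun k hk => hfwd k hk, fun k hk => hbwd k (by omega)⟩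
      · -- global bound
        intro k
        rcases lt_or_ge M k with hgt | hle
        · exact ((hfwd k hgt.le).trans hnum1)
        rcases le_or_gt N k with hge | hlt
        · calc dist (F f k y2) (x k)
              ≤ dist (F f k y2) (F f k y1) + dist (F f k y1) (F f k s.y)
                + dist (F f k s.y) (x k) := dist_triangle4 _ _ _ _
            _ ≤ r (n+1) + r (n+1) + (ε/2 - ε/2^(n+2)) :=
                add_le_add (add_le_add (h2f k hge) (hy1y k hle)) (ha k)
            _ ≤ ε/2 - ε/2^(n+1+2) := by linarith [hnum2]
        · exact (hbwd k hlt.le).trans hnum1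
      · -- Tendsto to z1 at atTop
        apply squeeze_zero (fun k => dist_nonneg)
          (fun k => dist_triangle (F f k y2) (F f k y1) (F f k z1))
        simpa using h2fT.add hy1zT
    · -- the link
      intro k hk1 hk2
      dsimp only at hk1 hk2 ⊢
      have hk1' : N ≤ k := by omega
      calc dist (F f k y2) (F f k s.y)
          ≤ dist (F f k y2) (F f k y1) + dist (F f k y1) (F f k s.y) := dist_triangle _ _ _
        _ ≤ r (n+1) + r (n+1) := add_le_add (h2f k hk1') (hy1y k hk2)
        _ = 2 * r (n+1) := by ring
  choose next hnext using step
  set seq : ℕ → IterState X := fun n => Nat.rec ⟨z0, z0, z0, 0, 0⟩ (fun m s => next m s) n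
    with hseqdef
  have hseqS : ∀ n, seq (n+1) = next n (seq n) := fun n => rfl
  have hPseq : ∀ n, P n (seq n) := by
    intro n
    induction n with
    | zero => exact hP0
    | succ m ih => exact ((hnext m (seq m)) ih).1
  have hLseq : ∀ n k, -(seq (n+1)).M' ≤ k → k ≤ (seq (n+1)).M →
      dist (F f k (seq (n+1)).y) (F f k (seq n).y) ≤ 2 * r (n+1) :=
    fun n => ((hnext n (seq n)) (hPseq n)).2
  -- limit point
  have hCauchy : CauchySeq (fun n => (seq n).y) := by
    apply cauchySeq_of_le_geometric (1/2) (ε/16) (by norm_num)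
    intro n
    have h0 := hLseq n 0 (by linarith [(hPseq (n+1)).2.1]) (hPseq (n+1)).1
    rw [F_zero, F_zero] at h0
    rw [dist_comm]
    refine h0.trans ?_
    rw [← hr2 n]
    simp only [hrdef]
    rw [show n+4 = n+4 from rfl, pow_add]
    ring_nf
    norm_num
  obtain ⟨yLim, hyLim⟩ := cauchySeq_tendsto_of_complete hCauchy
  have hdistlim : ∀ k, Tendsto (fun n => dist (F f k (seq n).y) (x k)) atTop
      (𝓝 (dist (F f k yLim) (x k))) :=
    fun k => (((F_cont f k).tendsto _).comp hyLim).dist tendsto_const_nhds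
  have hglobal : ∀ k, dist (F f k yLim) (x k) ≤ ε/2 := by
    intro k
    apply le_of_tendsto (hdistlim k)
    apply Eventually.of_forall
    intro n
    refine ((hPseq n).2.2.1 k).trans ?_
    have : 0 < ε/2^(n+2) := by positivity
    linarith
  have htailT : ∀ n k, (seq n).M ≤ k → dist (F f k yLim) (x k) ≤ 5 * r n := by
    have key : ∀ (n m : ℕ), n ≤ m → ∀ k, (seq n).M ≤ k →
        dist (F f k (seq m).y) (x k) ≤ 5 * r n - 2 * r m := by
      intro n m hm
      induction m, hm using Nat.le_induction with
      | base =>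
        intro k hk
        refine ((hPseq n).2.2.2.2.2.2.2.1 k hk).trans (by linarith [hrpos n])
      | succ m hm ih =>
        intro k hk
        rcases le_or_gt k (seq (m+1)).M with h1 | h1
        · have hlink := hLseq m k (le_trans (by linarith [(hPseq (m+1)).2.1, (hPseq n).1]) hk) h1
          calc dist (F f k (seq (m+1)).y) (x k)
              ≤ dist (F f k (seq (m+1)).y) (F f k (seq m).y)
                + dist (F f k (seq m).y) (x k) := dist_triangle _ _ _
            _ ≤ 2 * r (m+1) + (5 * r n - 2 * r m) := add_le_add hlink (ih k hk)
            _ = 5 * r n - 2 * r (m+1) := by rw [hr2 m]; ring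
        · refine ((hPseq (m+1)).2.2.2.2.2.2.2.1 k h1.le).trans ?_
          have := hrmono n (m+1) (by omega)
          linarith
    intro n k hk
    apply le_of_tendsto (hdistlim k)
    filter_upwards [eventually_ge_atTop n] with m hm
    have := key n m hm k hk
    linarith [hrpos m]
  have htailB : ∀ n k, k ≤ -(seq n).M' → dist (F f k yLim) (x k) ≤ 5 * r n := by
    have key : ∀ (n m : ℕ), n ≤ m → ∀ k, k ≤ -(seq n).M' →
        dist (F f k (seq m).y) (x k) ≤ 5 * r n - 2 * r m := by
      intro n m hm
      induction m, hm using Nat.le_induction with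
      | base =>
        intro k hk
        refine ((hPseq n).2.2.2.2.2.2.2.2 k hk).trans (by linarith [hrpos n])
      | succ m hm ih =>
        intro k hk
        rcases le_or_gt (-(seq (m+1)).M') k with h1 | h1
        · have hlink := hLseq m k h1
            (le_trans (hk.trans (by linarith [(hPseq n).2.1])) (hPseq (m+1)).1)
          calc dist (F f k (seq (m+1)).y) (x k)
              ≤ dist (F f k (seq (m+1)).y) (F f k (seq m).y)
                + dist (F f k (seq m).y) (x k) := dist_triangle _ _ _
            _ ≤ 2 * r (m+1) + (5 * r n - 2 * r m) := add_le_add hlink (ih k hk)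
            _ = 5 * r n - 2 * r (m+1) := by rw [hr2 m]; ring
        · refine ((hPseq (m+1)).2.2.2.2.2.2.2.2 k h1.le).trans ?_
          have := hrmono n (m+1) (by omega)
          linarith
    intro n k hk
    apply le_of_tendsto (hdistlim k)
    filter_upwards [eventually_ge_atTop n] with m hm
    have := key n m hm k hk
    linarith [hrpos m]
  -- conclusion
  have hrlim : Tendsto (fun n => 5 * r n) atTop (𝓝 0) := by
    have h1 : Tendsto (fun n : ℕ => (5*ε/16) * (1/2:ℝ)^n) atTop (𝓝 ((5*ε/16) * 0)) :=
      (tendsto_pow_atTop_nhds_zero_of_lt_one (by norm_num) (by norm_num)).const_mul _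
    rw [mul_zero] at h1
    apply h1.congr
    intro n
    simp only [hrdef]
    rw [div_pow, one_pow, pow_add]
    ring
  refine ⟨yLim, fun k => (hglobal k).trans (by linarith), ?_⟩
  rw [tendsto_cocompact_int_iff]
  constructor
  · rw [Metric.tendsto_nhds]
    intro η hη
    obtain ⟨n, hn⟩ := (eventually_atTop.mp (hrlim.eventually_lt_const hη)) 
    filter_upwards [eventually_le_atBot (-(seq n).M')] with k hk
    rw [Real.dist_eq, sub_zero, abs_of_nonneg dist_nonneg]
    exact lt_of_le_of_lt (htailB n k hk) (hn n le_rfl)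
  · rw [Metric.tendsto_nhds]
    intro η hη
    obtain ⟨n, hn⟩ := (eventually_atTop.mp (hrlim.eventually_lt_const hη)) 
    filter_upwards [eventually_ge_atTop ((seq n).M)] with k hk
    rw [Real.dist_eq, sub_zero, abs_of_nonneg dist_nonneg]
    exact lt_of_le_of_lt (htailT n k hk) (hn n le_rfl)

end LS

/-- L-shadowing iff shadowing together with the asymptotic
local-product-structure. -/
theorem stmt_3 {X : Type*} [MetricSpace X] [CompactSpace X] (f : X ≃ₜ X) :
    LS.LShadowing (LS.F f) ↔
      (LS.Shadowing (LS.F f) ∧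
        ∀ ε > (0:ℝ), ∃ δ > (0:ℝ), ∀ x y : X, dist x y ≤ δ →
          (LS.Vs f ε x ∩ LS.Vu f ε y).Nonempty) := by
  constructor
  · intro h
    exact ⟨LS.shadowing_of_lShadowing f h, LS.lps_of_lShadowing f h⟩
  · rintro ⟨h1, h2⟩
    exact LS.lShadowing_of_shadowing_lps f h1 h2
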